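/- Let V be an unregularized vector field with moving frame Φ and operator family P, and let w ∈ C⁰(I_T,H_1) ∩ C¹(I_T,H_0) be a solution of ∂_s w = V(w) with ‖w‖_{C⁰(I_T,H_1) ∩ C¹(I_T,H_0)} ≤ κ. Put ξ(s) := Φ(w(s)) ∂_s w(s) = Φ(w(s)) V(w(s)) ∈ C⁰(I_T,H_0). Then for every 0 < T' < T one has ξ ∈ C¹(I_{T'}, H_{−1}) and ∂_s ξ = DΦ(w)(Φ(w)⁻¹ξ, Φ(w)⁻¹ξ) + P(w)ξ + Fξ. -/

import Mathlib

open MeasureTheory Set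

namespace NLGF

variable {X : Type*} [AddCommGroup X] [Module ℝ X]

/-- A *moving frame* on the scale `(Mem, nrm)` (where `Mem k`/`nrm k` are membership in and
norm of the `k`-th level `H_k` of the scale): a family of isomorphisms `Φ(x) : H_0 → H_0`,
`x ∈ H_1`, together with derivatives `DΦ(x) : H_0 × H_0 → H_0`, satisfying the
properties (Φ1)–(Φ6) of Albers–Frauenfelder–Schlenk. -/
structure MovingFrame (Mem : ℤ → X → Prop) (nrm : ℤ → X → ℝ) : Type _ where
  Φ : X → X → X
  Φinv : X → X → X
  DΦ : X → X → X → X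
  -- `Φ x`, `Φinv x` are linear on `H_0`, `DΦ x` is bilinear on `H_0 × H_0`
  add_Φ : ∀ x v w, Mem 1 x → Mem 0 v → Mem 0 w → Φ x (v + w) = Φ x v + Φ x w
  smul_Φ : ∀ x (a : ℝ) v, Mem 1 x → Mem 0 v → Φ x (a • v) = a • Φ x v
  add_Φinv : ∀ x v w, Mem 1 x → Mem 0 v → Mem 0 w → Φinv x (v + w) = Φinv x v + Φinv x w
  smul_Φinv : ∀ x (a : ℝ) v, Mem 1 x → Mem 0 v → Φinv x (a • v) = a • Φinv x v
  add_DΦ_right : ∀ x h v w, Mem 1 x → Mem 0 h → Mem 0 v → Mem 0 w →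
    DΦ x h (v + w) = DΦ x h v + DΦ x h w
  smul_DΦ_right : ∀ x h (a : ℝ) v, Mem 1 x → Mem 0 h → Mem 0 v →
    DΦ x h (a • v) = a • DΦ x h v
  add_DΦ_left : ∀ x h g v, Mem 1 x → Mem 0 h → Mem 0 g → Mem 0 v →
    DΦ x (h + g) v = DΦ x h v + DΦ x g v
  smul_DΦ_left : ∀ x (a : ℝ) h v, Mem 1 x → Mem 0 h → Mem 0 v →
    DΦ x (a • h) v = a • DΦ x h v
  mem_Φ : ∀ x v, Mem 1 x → Mem 0 v → Mem 0 (Φ x v)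
  mem_Φinv : ∀ x v, Mem 1 x → Mem 0 v → Mem 0 (Φinv x v)
  mem_DΦ : ∀ x h v, Mem 1 x → Mem 0 h → Mem 0 v → Mem 0 (DΦ x h v)
  -- (Φ1): `Φ(x) : H_0 → H_0` is an isomorphism
  Φ_left_inv : ∀ x v, Mem 1 x → Mem 0 v → Φinv x (Φ x v) = v
  Φ_right_inv : ∀ x v, Mem 1 x → Mem 0 v → Φ x (Φinv x v) = v
  bounded_Φ : ∀ x, Mem 1 x → ∃ C > 0, ∀ v, Mem 0 v →
    nrm 0 (Φ x v) ≤ C * nrm 0 v ∧ nrm 0 (Φinv x v) ≤ C * nrm 0 v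
  bounded_DΦ : ∀ x, Mem 1 x → ∃ C > 0, ∀ h v, Mem 0 h → Mem 0 v →
    nrm 0 (DΦ x h v) ≤ C * (nrm 0 h * nrm 0 v)
  -- (Φ2): `(x,v) ↦ Φ(x)v` is continuous `H_1 × H_0 → H_0`
  cont_Φ : ∀ x v, Mem 1 x → Mem 0 v → ∀ ε > 0, ∃ δ > 0, ∀ x' v', Mem 1 x' → Mem 0 v' →
    nrm 1 (x' - x) < δ → nrm 0 (v' - v) < δ → nrm 0 (Φ x' v' - Φ x v) < ε
  -- (Φ3): `DΦ(x)` is the derivative of `x ↦ Φ(x)v`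
  hasDeriv_Φ : ∀ x v, Mem 1 x → Mem 0 v → ∀ ε > 0, ∃ δ > 0, ∀ h, Mem 1 h → nrm 1 h < δ →
    nrm 0 (Φ (x + h) v - Φ x v - DΦ x h v) ≤ ε * nrm 1 h
  -- (Φ4): `(x,h,v) ↦ DΦ(x)(h,v)` is continuous `H_1 × H_0 × H_0 → H_0`
  cont_DΦ : ∀ x h v, Mem 1 x → Mem 0 h → Mem 0 v → ∀ ε > 0, ∃ δ > 0,
    ∀ x' h' v', Mem 1 x' → Mem 0 h' → Mem 0 v' →
      nrm 1 (x' - x) < δ → nrm 0 (h' - h) < δ → nrm 0 (v' - v) < δ →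
      nrm 0 (DΦ x' h' v' - DΦ x h v) < ε
  -- (Φ5): `Φ(x)` restricts to an isomorphism of `H_1`, continuously in `(x,v) ∈ H_1 × H_1`
  mem_Φ_one : ∀ x v, Mem 1 x → Mem 1 v → Mem 1 (Φ x v)
  mem_Φinv_one : ∀ x v, Mem 1 x → Mem 1 v → Mem 1 (Φinv x v)
  cont_Φ_one : ∀ x v, Mem 1 x → Mem 1 v → ∀ ε > 0, ∃ δ > 0, ∀ x' v', Mem 1 x' → Mem 1 v' →
    nrm 1 (x' - x) < δ → nrm 1 (v' - v) < δ →
    nrm 1 (Φ x' v' - Φ x v) < ε ∧ nrm 1 (Φinv x' v' - Φinv x v) < ε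
  -- (Φ6): uniform bounds on balls of `H_1`
  uniform_bound : ∀ κ > 0, ∃ c0 > 0, ∀ x, Mem 1 x → nrm 1 x ≤ κ →
    (∀ v, Mem 0 v → nrm 0 (Φ x v) ≤ c0 * nrm 0 v ∧ nrm 0 (Φinv x v) ≤ c0 * nrm 0 v) ∧
    (∀ v, Mem 1 v → nrm 1 (Φ x v) ≤ c0 * nrm 1 v ∧ nrm 1 (Φinv x v) ≤ c0 * nrm 1 v) ∧
    (∀ h v, Mem 0 h → Mem 0 v → nrm 0 (DΦ x h v) ≤ c0 * (nrm 0 h * nrm 0 v))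

/-- An *unregularized vector field* on the scale `(Mem, nrm)` with fundamental operator `F`:
a map `V ∈ C⁰(H_1,H_0) ∩ C⁰(H_2,H_1)`, differentiable as a map `H_1 → H_0`, satisfying
properties (V1)–(V3) of Albers–Frauenfelder–Schlenk with respect to a moving frame `Φ`. -/
structure UVF (Mem : ℤ → X → Prop) (nrm : ℤ → X → ℝ) (F : X → X) : Type _ where
  V : X → X
  DV : X → X → X
  frame : MovingFrame Mem nrm
  P : X → X → X
  -- `V ∈ C⁰(H_1,H_0) ∩ C⁰(H_2,H_1)`
  mem_V_one : ∀ x, Mem 1 x → Mem 0 (V x)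
  mem_V_two : ∀ x, Mem 2 x → Mem 1 (V x)
  cont_V_one : ∀ x, Mem 1 x → ∀ ε > 0, ∃ δ > 0, ∀ x', Mem 1 x' →
    nrm 1 (x' - x) < δ → nrm 0 (V x' - V x) < ε
  cont_V_two : ∀ x, Mem 2 x → ∀ ε > 0, ∃ δ > 0, ∀ x', Mem 2 x' →
    nrm 2 (x' - x) < δ → nrm 1 (V x' - V x) < ε
  -- `V : H_1 → H_0` is differentiable with differential `DV(x) : H_1 → H_0`
  add_DV : ∀ x h g, Mem 1 x → Mem 1 h → Mem 1 g → DV x (h + g) = DV x h + DV x g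
  smul_DV : ∀ x (a : ℝ) h, Mem 1 x → Mem 1 h → DV x (a • h) = a • DV x h
  mem_DV : ∀ x h, Mem 1 x → Mem 1 h → Mem 0 (DV x h)
  hasDeriv_V : ∀ x, Mem 1 x → ∀ ε > 0, ∃ δ > 0, ∀ h, Mem 1 h → nrm 1 h < δ →
    nrm 0 (V (x + h) - V x - DV x h) ≤ ε * nrm 1 h
  -- (V1): `(x,x̂) ↦ DV(x)x̂` is continuous `H_1 × H_1 → H_0`
  cont_DV : ∀ x h, Mem 1 x → Mem 1 h → ∀ ε > 0, ∃ δ > 0, ∀ x' h', Mem 1 x' → Mem 1 h' →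
    nrm 1 (x' - x) < δ → nrm 1 (h' - h) < δ → nrm 0 (DV x' h' - DV x h) < ε
  -- (V2): `Φ(x) DV(x) Φ(x)⁻¹ - F : H_1 → H_0` extends to a continuous linear
  -- operator `P(x) : H_0 → H_0`, with `(x,x̂) ↦ P(x)x̂` continuous `H_1 × H_0 → H_0`
  add_P : ∀ x v w, Mem 1 x → Mem 0 v → Mem 0 w → P x (v + w) = P x v + P x w
  smul_P : ∀ x (a : ℝ) v, Mem 1 x → Mem 0 v → P x (a • v) = a • P x v
  mem_P : ∀ x v, Mem 1 x → Mem 0 v → Mem 0 (P x v)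
  bounded_P : ∀ x, Mem 1 x → ∃ C > 0, ∀ v, Mem 0 v → nrm 0 (P x v) ≤ C * nrm 0 v
  extends_P : ∀ x h, Mem 1 x → Mem 1 h → P x h = frame.Φ x (DV x (frame.Φinv x h)) - F h
  cont_P : ∀ x v, Mem 1 x → Mem 0 v → ∀ ε > 0, ∃ δ > 0, ∀ x' v', Mem 1 x' → Mem 0 v' →
    nrm 1 (x' - x) < δ → nrm 0 (v' - v) < δ → nrm 0 (P x' v' - P x v) < ε
  -- (V3): bounds on balls of `H_1`
  bound_V3 : ∀ κ > 0, ∃ c1 > 0,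
    (∀ x, Mem 1 x → nrm 1 x ≤ κ → ∀ v, Mem 0 v → nrm 0 (P x v) ≤ c1 * nrm 0 v) ∧
    (∀ x, Mem 2 x → nrm 1 x ≤ κ → nrm 2 x ≤ c1 * (nrm 1 (V x) + 1))

/-- An unregularized vector field is *elementary with constant `c`* if its moving frame is
the identity and (V3') holds with the uniform constant `c`. -/
def UVF.ElementaryWith {Mem : ℤ → X → Prop} {nrm : ℤ → X → ℝ} {F : X → X}
    (W : UVF Mem nrm F) (c : ℝ) : Prop :=
  (∀ x v, W.frame.Φ x v = v) ∧ (∀ x v, W.frame.Φinv x v = v) ∧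
  (∀ x h v, W.frame.DΦ x h v = 0) ∧ 0 < c ∧
  (∀ x, Mem 1 x →
    (∀ v, Mem 0 v → nrm 0 (W.P x v) ≤ c * nrm 0 v) ∧ nrm 1 x ≤ c * (nrm 0 (W.V x) + 1)) ∧
  (∀ x, Mem 2 x → nrm 2 x ≤ c * (nrm 1 (W.V x) + nrm 1 x + 1))

/-- An *elementary* unregularized vector field: the moving frame in (V2) can be chosen to be
the identity, and the strengthened uniform bound (V3') holds. -/
def UVF.Elementary {Mem : ℤ → X → Prop} {nrm : ℤ → X → ℝ} {F : X → X}
    (W : UVF Mem nrm F) : Prop :=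
  ∃ c : ℝ, W.ElementaryWith c

/-- `w ∈ C⁰(I, H_k)` : the curve `w` takes values in `H_k` and is continuous on `I`
with respect to the `H_k`-norm. -/
def ContCurveOn (Mem : ℤ → X → Prop) (nrm : ℤ → X → ℝ) (k : ℤ) (I : Set ℝ) (w : ℝ → X) :
    Prop :=
  (∀ s ∈ I, Mem k (w s)) ∧
  ∀ s ∈ I, ∀ ε > 0, ∃ δ > 0, ∀ s' ∈ I, |s' - s| < δ → nrm k (w s' - w s) < ε

/-- The curve `w` is differentiable on `I` in the `H_k`-norm, with derivative `dw`. -/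
def HasDerivCurveOn (nrm : ℤ → X → ℝ) (k : ℤ) (I : Set ℝ) (w dw : ℝ → X) : Prop :=
  ∀ s ∈ I, ∀ ε > 0, ∃ δ > 0, ∀ s' ∈ I, s' ≠ s → |s' - s| < δ →
    nrm k ((s' - s)⁻¹ • (w s' - w s) - dw s) < ε

/-- `w ∈ C⁰(I_T, H_1) ∩ C¹(I_T, H_0)` is a solution of the unregularized gradient flow
equation `∂ₛ w = V(w)` on `I_T = (-T,T)`. -/
def IsGradSol (Mem : ℤ → X → Prop) (nrm : ℤ → X → ℝ) (Vf : X → X) (T : ℝ) (w : ℝ → X) :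
    Prop :=
  ContCurveOn Mem nrm 1 (Ioo (-T) T) w ∧
  HasDerivCurveOn nrm 0 (Ioo (-T) T) w (fun s => Vf (w s)) ∧
  ContCurveOn Mem nrm 0 (Ioo (-T) T) (fun s => Vf (w s))

end NLGF

open scoped ENNReal

namespace NLGF

/-- `f : ℕ → (0,∞)` is monotone increasing and unbounded. -/
def GoodWeight (f : ℕ → ℝ) : Prop :=
  (∀ ν, 0 < f ν) ∧ Monotone f ∧ ∀ c : ℝ, ∃ ν, c < f ν

/-- `ζ : ℕ → {±1}`. -/
def Signs (ζ : ℕ → ℝ) : Prop := ∀ ν, ζ ν = 1 ∨ ζ ν = -1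

/-- Membership in `H_k = ℓ²_{f^k}` : `∑ f(ν)^k x_ν² < ∞`. -/
def sMem (f : ℕ → ℝ) (k : ℤ) (x : ℕ → ℝ) : Prop :=
  Summable fun ν => f ν ^ k * x ν ^ 2

/-- The norm of `H_k = ℓ²_{f^k}`. -/
noncomputable def snrm (f : ℕ → ℝ) (k : ℤ) (x : ℕ → ℝ) : ℝ :=
  Real.sqrt (∑' ν, f ν ^ k * x ν ^ 2)

/-- The fundamental operator `(F x)_ν = ζ(ν) √(f(ν)) x_ν`, an isometry `H_{k+1} → H_k`. -/
noncomputable def sF (f ζ : ℕ → ℝ) (x : ℕ → ℝ) : ℕ → ℝ :=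
  fun ν => ζ ν * Real.sqrt (f ν) * x ν

/-- The squared `L²(I, H_k)`-norm of a curve `u`, as an extended real. -/
noncomputable def eL2 (f : ℕ → ℝ) (k : ℤ) (I : Set ℝ) (u : ℝ → ℕ → ℝ) : ℝ≥0∞ :=
  ∫⁻ s in I, ENNReal.ofReal ((snrm f k (u s)) ^ 2)

/-- `g` is a weak derivative of `u` on the interval `I` (componentwise, against smooth
compactly supported test functions). -/
def WeakDerivOn (I : Set ℝ) (u g : ℝ → ℕ → ℝ) : Prop :=
  ∀ (ν : ℕ) (φ : ℝ → ℝ), ContDiff ℝ (⊤ : ℕ∞) φ → HasCompactSupport φ → tsupport φ ⊆ I →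
    ∫ s in I, u s ν * deriv φ s = - ∫ s in I, g s ν * φ s

end NLGF

namespace NLGF

/-! ### Auxiliary lemmas on the scale `H_k = ℓ²_{f^k}` -/

section ScaleLemmas

variable {f ζ : ℕ → ℝ} {k : ℤ} {x y : ℕ → ℝ}

local instance : Fact ((1 : ℝ≥0∞) ≤ 2) := ⟨one_le_two⟩

lemma gw_zpow_pos (hf : GoodWeight f) (k : ℤ) (ν : ℕ) : (0:ℝ) < f ν ^ k :=
  zpow_pos (hf.1 ν) k

lemma sMem_zero (f : ℕ → ℝ) (k : ℤ) : sMem f k 0 := by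
  simpa [sMem] using summable_zero

lemma sMem.smul (hx : sMem f k x) (a : ℝ) : sMem f k (a • x) := by
  have : (fun ν => f ν ^ k * (a • x) ν ^ 2) = fun ν => a ^ 2 * (f ν ^ k * x ν ^ 2) := by
    funext ν; simp [Pi.smul_apply, smul_eq_mul]; ring
  unfold sMem
  rw [this]
  exact hx.mul_left _

lemma sMem.add (hf : GoodWeight f) (hx : sMem f k x) (hy : sMem f k y) :
    sMem f k (x + y) := by
  refine Summable.of_nonneg_of_le (fun ν => ?_) (fun ν => ?_)
    ((hx.mul_left 2).add (hy.mul_left 2))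
  · have := gw_zpow_pos hf k ν; positivity
  · have hp := (gw_zpow_pos hf k ν).le
    have h2 : (x ν + y ν) ^ 2 ≤ 2 * x ν ^ 2 + 2 * y ν ^ 2 := by
      nlinarith [sq_nonneg (x ν - y ν)]
    calc f ν ^ k * (x + y) ν ^ 2 = f ν ^ k * (x ν + y ν) ^ 2 := by simp
      _ ≤ f ν ^ k * (2 * x ν ^ 2 + 2 * y ν ^ 2) := by
          exact mul_le_mul_of_nonneg_left h2 hp
      _ = 2 * (f ν ^ k * x ν ^ 2) + 2 * (f ν ^ k * y ν ^ 2) := by ring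

lemma sMem.neg (hx : sMem f k x) : sMem f k (-x) := by
  simpa using hx.smul (-1)

lemma sMem.sub (hf : GoodWeight f) (hx : sMem f k x) (hy : sMem f k y) :
    sMem f k (x - y) := by
  simpa [sub_eq_add_neg] using hx.add hf hy.neg

lemma sMem.pred (hf : GoodWeight f) (hx : sMem f k x) : sMem f (k - 1) x := by
  refine Summable.of_nonneg_of_le (fun ν => ?_) (fun ν => ?_) (hx.mul_left (f 0)⁻¹)
  · have := gw_zpow_pos hf (k - 1) ν; positivity
  · have hν : 0 < f ν := hf.1 ν
    have h0 : 0 < f 0 := hf.1 0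
    have hle : f 0 ≤ f ν := hf.2.1 (Nat.zero_le ν)
    have : f ν ^ (k - 1) = f ν ^ k * (f ν)⁻¹ := by
      rw [zpow_sub₀ hν.ne', zpow_one, div_eq_mul_inv]
    rw [this]
    have hinv : (f ν)⁻¹ ≤ (f 0)⁻¹ := by
      exact inv_anti₀ h0 hle
    calc f ν ^ k * (f ν)⁻¹ * x ν ^ 2 ≤ f ν ^ k * (f 0)⁻¹ * x ν ^ 2 := by
          have h1 := (gw_zpow_pos hf k ν).le
          have hx2 := sq_nonneg (x ν)
          gcongr
      _ = (f 0)⁻¹ * (f ν ^ k * x ν ^ 2) := by ring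

lemma sMem.down (hf : GoodWeight f) (hx : sMem f 1 x) : sMem f 0 x := by
  simpa using hx.pred hf

lemma sMem.downneg (hf : GoodWeight f) (hx : sMem f 0 x) : sMem f (-1) x := by
  have := hx.pred hf
  norm_num at this
  exact this

lemma snrm_nonneg (f : ℕ → ℝ) (k : ℤ) (x : ℕ → ℝ) : 0 ≤ snrm f k x :=
  Real.sqrt_nonneg _

lemma snrm_zero (f : ℕ → ℝ) (k : ℤ) : snrm f k 0 = 0 := by
  simp [snrm]

lemma snrm_smul (f : ℕ → ℝ) (k : ℤ) (a : ℝ) (x : ℕ → ℝ) :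
    snrm f k (a • x) = |a| * snrm f k x := by
  unfold snrm
  have : (fun ν => f ν ^ k * (a • x) ν ^ 2) = fun ν => a ^ 2 * (f ν ^ k * x ν ^ 2) := by
    funext ν; simp [Pi.smul_apply, smul_eq_mul]; ring
  rw [this, tsum_mul_left, Real.sqrt_mul (sq_nonneg a), Real.sqrt_sq_eq_abs]

lemma snrm_neg (f : ℕ → ℝ) (k : ℤ) (x : ℕ → ℝ) : snrm f k (-x) = snrm f k x := by
  have := snrm_smul f k (-1) x
  simpa using this

lemma snrm_pred_le (hf : GoodWeight f) (hx : sMem f k x) :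
    snrm f (k - 1) x ≤ Real.sqrt (f 0)⁻¹ * snrm f k x := by
  unfold snrm
  rw [← Real.sqrt_mul (inv_nonneg.mpr (hf.1 0).le)]
  apply Real.sqrt_le_sqrt
  rw [← tsum_mul_left]
  refine Summable.tsum_le_tsum (fun ν => ?_) (hx.pred hf) (hx.mul_left _)
  have hν : 0 < f ν := hf.1 ν
  have h0 : 0 < f 0 := hf.1 0
  have hle : f 0 ≤ f ν := hf.2.1 (Nat.zero_le ν)
  have : f ν ^ (k - 1) = f ν ^ k * (f ν)⁻¹ := by
    rw [zpow_sub₀ hν.ne', zpow_one, div_eq_mul_inv]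
  rw [this]
  have hinv : (f ν)⁻¹ ≤ (f 0)⁻¹ := inv_anti₀ h0 hle
  have h1 := (gw_zpow_pos hf k ν).le
  have hx2 := sq_nonneg (x ν)
  calc f ν ^ k * (f ν)⁻¹ * x ν ^ 2 ≤ f ν ^ k * (f 0)⁻¹ * x ν ^ 2 := by gcongr
    _ = (f 0)⁻¹ * (f ν ^ k * x ν ^ 2) := by ring

lemma snrm_neg_one_le (hf : GoodWeight f) (hx : sMem f 0 x) :
    snrm f (-1) x ≤ Real.sqrt (f 0)⁻¹ * snrm f 0 x := by
  have h := snrm_pred_le (k := 0) hf hx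
  simpa only [zero_sub] using h

/-- The auxiliary map turning `H_k` into a plain `ℓ²` sequence. -/
noncomputable def jmap (f : ℕ → ℝ) (k : ℤ) (x : ℕ → ℝ) : ℕ → ℝ :=
  fun ν => Real.sqrt (f ν ^ k) * x ν

lemma jmap_sq (hf : GoodWeight f) (k : ℤ) (x : ℕ → ℝ) (ν : ℕ) :
    jmap f k x ν ^ 2 = f ν ^ k * x ν ^ 2 := by
  unfold jmap
  rw [mul_pow, Real.sq_sqrt (gw_zpow_pos hf k ν).le]

lemma jmap_add (f : ℕ → ℝ) (k : ℤ) (x y : ℕ → ℝ) :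
    jmap f k (x + y) = jmap f k x + jmap f k y := by
  funext ν; simp [jmap]; ring

lemma jmap_sub (f : ℕ → ℝ) (k : ℤ) (x y : ℕ → ℝ) :
    jmap f k (x - y) = jmap f k x - jmap f k y := by
  funext ν; simp [jmap]; ring

lemma jmap_smul (f : ℕ → ℝ) (k : ℤ) (a : ℝ) (x : ℕ → ℝ) :
    jmap f k (a • x) = a • jmap f k x := by
  funext ν; simp [jmap]; ring

lemma memℓp_jmap (hf : GoodWeight f) (hx : sMem f k x) :
    Memℓp (jmap f k x) 2 := by
  apply memℓp_gen
  have : (fun ν => ‖jmap f k x ν‖ ^ (2:ℝ≥0∞).toReal) = fun ν => f ν ^ k * x ν ^ 2 := by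
    funext ν
    rw [show ((2:ℝ≥0∞).toReal) = ((2:ℕ):ℝ) by norm_num, Real.rpow_natCast,
      Real.norm_eq_abs, sq_abs, jmap_sq hf]
  rw [this]
  exact hx

lemma lp_norm_eq (a : lp (fun _ : ℕ => ℝ) 2) :
    ‖a‖ = Real.sqrt (∑' ν, (a ν) ^ 2) := by
  rw [lp.norm_eq_tsum_rpow (by norm_num) a]
  have : (fun ν => ‖a ν‖ ^ (2:ℝ≥0∞).toReal) = fun ν => (a ν) ^ 2 := by
    funext ν
    rw [show ((2:ℝ≥0∞).toReal) = ((2:ℕ):ℝ) by norm_num, Real.rpow_natCast,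
      Real.norm_eq_abs, sq_abs]
  rw [this]
  rw [Real.sqrt_eq_rpow]
  norm_num

lemma snrm_eq_lp_norm (hf : GoodWeight f) (hx : sMem f k x) :
    snrm f k x = ‖(⟨jmap f k x, memℓp_jmap hf hx⟩ : lp (fun _ : ℕ => ℝ) 2)‖ := by
  rw [lp_norm_eq]
  unfold snrm
  congr 1
  apply tsum_congr
  intro ν
  exact (jmap_sq hf k x ν).symm

lemma snrm_add_le (hf : GoodWeight f) (hx : sMem f k x) (hy : sMem f k y) :
    snrm f k (x + y) ≤ snrm f k x + snrm f k y := by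
  rw [snrm_eq_lp_norm hf (hx.add hf hy), snrm_eq_lp_norm hf hx, snrm_eq_lp_norm hf hy]
  have : (⟨jmap f k (x + y), memℓp_jmap hf (hx.add hf hy)⟩ : lp (fun _ : ℕ => ℝ) 2)
      = ⟨jmap f k x, memℓp_jmap hf hx⟩ + ⟨jmap f k y, memℓp_jmap hf hy⟩ := by
    apply Subtype.ext
    rw [lp.coeFn_add]
    exact jmap_add f k x y
  rw [this]
  exact norm_add_le _ _

lemma snrm_sub_le (hf : GoodWeight f) (hx : sMem f k x) (hy : sMem f k y) :
    snrm f k (x - y) ≤ snrm f k x + snrm f k y := by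
  have := snrm_add_le hf hx hy.neg
  rw [snrm_neg] at this
  simpa [sub_eq_add_neg] using this

/-! ### The fundamental operator -/

lemma sF_apply_sq (hf : GoodWeight f) (hζ : Signs ζ) (x : ℕ → ℝ) (ν : ℕ) :
    sF f ζ x ν ^ 2 = f ν * x ν ^ 2 := by
  unfold sF
  have hz : ζ ν ^ 2 = 1 := by rcases hζ ν with h | h <;> rw [h] <;> norm_num
  have : (ζ ν * Real.sqrt (f ν) * x ν) ^ 2
      = ζ ν ^ 2 * Real.sqrt (f ν) ^ 2 * x ν ^ 2 := by ring
  rw [this, hz, Real.sq_sqrt (hf.1 ν).le, one_mul]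

lemma sF_term_eq (hf : GoodWeight f) (hζ : Signs ζ) (x : ℕ → ℝ) (ν : ℕ) :
    f ν ^ (-1 : ℤ) * sF f ζ x ν ^ 2 = f ν ^ (0 : ℤ) * x ν ^ 2 := by
  rw [sF_apply_sq hf hζ]
  have hν := (hf.1 ν).ne'
  field_simp

lemma sMem_sF (hf : GoodWeight f) (hζ : Signs ζ) (hx : sMem f 0 x) :
    sMem f (-1) (sF f ζ x) := by
  unfold sMem
  have : (fun ν => f ν ^ (-1:ℤ) * sF f ζ x ν ^ 2) = fun ν => f ν ^ (0:ℤ) * x ν ^ 2 := by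
    funext ν; exact sF_term_eq hf hζ x ν
  rw [this]
  exact hx

lemma snrm_sF (hf : GoodWeight f) (hζ : Signs ζ) (x : ℕ → ℝ) :
    snrm f (-1) (sF f ζ x) = snrm f 0 x := by
  unfold snrm
  congr 1
  apply tsum_congr
  intro ν
  exact sF_term_eq hf hζ x ν

lemma sF_sub (f ζ : ℕ → ℝ) (x y : ℕ → ℝ) :
    sF f ζ (x - y) = sF f ζ x - sF f ζ y := by
  funext ν; simp [sF]; ring

lemma sF_smul (f ζ : ℕ → ℝ) (a : ℝ) (x : ℕ → ℝ) :
    sF f ζ (a • x) = a • sF f ζ x := by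
  funext ν; simp [sF]; ring

end ScaleLemmas

section Bridge

instance factOneLeTwo : Fact ((1 : ℝ≥0∞) ≤ 2) := ⟨one_le_two⟩

variable {f ζ : ℕ → ℝ} {x y z : ℕ → ℝ}

/-- The identification of `H_{-1}` with a subset of `ℓ²`, extended by `0`. -/
noncomputable def toE (f : ℕ → ℝ) (x : ℕ → ℝ) : lp (fun _ : ℕ => ℝ) 2 :=
  open Classical in
  if h : Memℓp (jmap f (-1) x) 2 then ⟨jmap f (-1) x, h⟩ else 0

lemma toE_coe (hf : GoodWeight f) (hx : sMem f (-1) x) :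
    ((toE f x : lp (fun _ : ℕ => ℝ) 2) : ∀ _ : ℕ, ℝ) = jmap f (-1) x := by
  unfold toE
  rw [dif_pos (memℓp_jmap hf hx)]

lemma norm_toE (hf : GoodWeight f) (hx : sMem f (-1) x) :
    ‖toE f x‖ = snrm f (-1) x := by
  unfold toE
  rw [dif_pos (memℓp_jmap hf hx)]
  exact (snrm_eq_lp_norm hf hx).symm

lemma toE_sub_toE (hf : GoodWeight f) (hx : sMem f (-1) x) (hy : sMem f (-1) y) :
    toE f (x - y) = toE f x - toE f y := by
  apply Subtype.ext
  have : ((toE f x - toE f y : lp (fun _ : ℕ => ℝ) 2) : ∀ _ : ℕ, ℝ)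
      = jmap f (-1) x - jmap f (-1) y := by
    rw [lp.coeFn_sub, toE_coe hf hx, toE_coe hf hy]
  rw [this, toE_coe hf (hx.sub hf hy), jmap_sub]

lemma toE_smul_toE (hf : GoodWeight f) (hx : sMem f (-1) x) (c : ℝ) :
    toE f (c • x) = c • toE f x := by
  apply Subtype.ext
  have : ((c • toE f x : lp (fun _ : ℕ => ℝ) 2) : ∀ _ : ℕ, ℝ) = c • jmap f (-1) x := by
    rw [lp.coeFn_smul, toE_coe hf hx]
  rw [this, toE_coe hf (hx.smul c), jmap_smul]

lemma norm_toE_sub (hf : GoodWeight f) (hx : sMem f (-1) x) (hy : sMem f (-1) y) :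
    ‖toE f x - toE f y‖ = snrm f (-1) (x - y) := by
  rw [← toE_sub_toE hf hx hy, norm_toE hf (hx.sub hf hy)]

lemma norm_toE_sub_sub_smul (hf : GoodWeight f) (hx : sMem f (-1) x)
    (hy : sMem f (-1) y) (hz : sMem f (-1) z) (c : ℝ) :
    ‖toE f x - toE f y - c • toE f z‖ = snrm f (-1) (x - y - c • z) := by
  rw [← toE_smul_toE hf hz c, ← toE_sub_toE hf hx hy,
    ← toE_sub_toE hf (hx.sub hf hy) (hz.smul c),
    norm_toE hf (((hx.sub hf hy)).sub hf (hz.smul c))]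

/-- Transfer of an `ε`-`δ` derivative statement to a `HasDerivWithinAt` statement in `ℓ²`. -/
lemma toE_hasDerivWithinAt (hf : GoodWeight f) {g : ℝ → ℕ → ℝ} {G : ℕ → ℝ}
    {s : Set ℝ} {t : ℝ}
    (hmem : ∀ u : ℝ, sMem f (-1) (g u)) (hG : sMem f (-1) G)
    (hder : ∀ ε > 0, ∃ δ > 0, ∀ t' ∈ s, |t' - t| < δ →
      snrm f (-1) (g t' - g t - (t' - t) • G) ≤ ε * |t' - t|) :
    HasDerivWithinAt (fun u => toE f (g u)) (toE f G) s t := by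
  rw [hasDerivWithinAt_iff_tendsto_slope, Metric.tendsto_nhdsWithin_nhds]
  intro ε hε
  obtain ⟨δ, hδ, hp⟩ := hder (ε / 2) (by linarith)
  refine ⟨δ, hδ, ?_⟩
  intro t' ht' hdist
  have htne : t' ≠ t := by
    intro hcon
    exact ht'.2 (by simp [hcon])
  have hd : |t' - t| < δ := by
    simpa [Real.dist_eq] using hdist
  have h0 : t' - t ≠ 0 := sub_ne_zero.mpr htne
  have habs : 0 < |t' - t| := abs_pos.mpr h0
  have hkey := hp t' ht'.1 hd
  rw [dist_eq_norm]
  have hsl : slope (fun u => toE f (g u)) t t' - toE f G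
      = (t' - t)⁻¹ • (toE f (g t') - toE f (g t) - (t' - t) • toE f G) := by
    have hcan : (t' - t)⁻¹ • ((t' - t) • toE f G) = toE f G := by
      rw [smul_smul, inv_mul_cancel₀ h0, one_smul]
    rw [slope_def_module,
      smul_sub (t' - t)⁻¹ (toE f (g t') - toE f (g t)) ((t' - t) • toE f G), hcan]
  rw [hsl, norm_smul]
  rw [norm_toE_sub_sub_smul hf (hmem t') (hmem t) hG]
  have : ‖(t' - t)⁻¹‖ = |t' - t|⁻¹ := by
    rw [Real.norm_eq_abs, abs_inv]
  rw [this]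
  calc |t' - t|⁻¹ * snrm f (-1) (g t' - g t - (t' - t) • G)
      ≤ |t' - t|⁻¹ * (ε / 2 * |t' - t|) := by
        apply mul_le_mul_of_nonneg_left hkey (by positivity)
    _ = ε / 2 := by field_simp
    _ < ε := by linarith

end Bridge

section FrameLemmas

variable {f : ℕ → ℝ}

lemma Phi_sub (M : MovingFrame (sMem f) (snrm f)) (hf : GoodWeight f)
    {x v u : ℕ → ℝ} (hx : sMem f 1 x) (hv : sMem f 0 v) (hu : sMem f 0 u) :
    M.Φ x (v - u) = M.Φ x v - M.Φ x u := by
  have h1 : v - u = v + (-1 : ℝ) • u := by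
    funext ν; simp [sub_eq_add_neg]
  rw [h1, M.add_Φ x v ((-1:ℝ) • u) hx hv (hu.smul _), M.smul_Φ x (-1) u hx hu]
  funext ν; simp [sub_eq_add_neg]

section Combo

lemma snrm_neg_one_lt (hf : GoodWeight f) {z : ℕ → ℝ} {ε : ℝ}
    (hz : sMem f 0 z) (h : snrm f 0 z < ε / (Real.sqrt (f 0)⁻¹ + 1)) :
    snrm f (-1) z < ε := by
  have hCm0 : 0 ≤ Real.sqrt (f 0)⁻¹ := Real.sqrt_nonneg _
  have h1 := snrm_neg_one_le hf hz
  have hd : 0 < Real.sqrt (f 0)⁻¹ + 1 := by linarith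
  have hεp : 0 < ε := by
    have h0 := snrm_nonneg f 0 z
    have h2 : 0 < ε / (Real.sqrt (f 0)⁻¹ + 1) := lt_of_le_of_lt h0 h
    have h3 := mul_pos h2 hd
    rwa [div_mul_cancel₀ _ hd.ne'] at h3
  have h2 : Real.sqrt (f 0)⁻¹ * snrm f 0 z
      ≤ Real.sqrt (f 0)⁻¹ * (ε / (Real.sqrt (f 0)⁻¹ + 1)) :=
    mul_le_mul_of_nonneg_left h.le hCm0
  have h3 : Real.sqrt (f 0)⁻¹ * (ε / (Real.sqrt (f 0)⁻¹ + 1)) < ε := by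
    rw [← mul_div_assoc, div_lt_iff₀ hd]
    nlinarith
  linarith

lemma snrm_combo (hf : GoodWeight f) {a b c : ℕ → ℝ} {ε : ℝ}
    (ha : sMem f 0 a) (hb : sMem f 0 b) (hc : sMem f (-1) c)
    (hna : snrm f 0 a < ε / (3 * (Real.sqrt (f 0)⁻¹ + 1)))
    (hnb : snrm f 0 b < ε / (3 * (Real.sqrt (f 0)⁻¹ + 1)))
    (hnc : snrm f (-1) c < ε / 3) :
    snrm f (-1) (a + b + c) < ε := by
  have key : ∀ u : ℕ → ℝ, sMem f 0 u →
      snrm f 0 u < ε / (3 * (Real.sqrt (f 0)⁻¹ + 1)) → snrm f (-1) u < ε / 3 := by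
    intro u hu hn
    rw [← div_div] at hn
    exact snrm_neg_one_lt hf hu hn
  have t0 := snrm_add_le hf ((ha.downneg hf).add hf (hb.downneg hf)) hc
  have t1 := snrm_add_le hf (ha.downneg hf) (hb.downneg hf)
  have c1 := key a ha hna
  have c2 := key b hb hnb
  linarith

end Combo

end FrameLemmas

set_option maxHeartbeats 2000000 in
/-- **Claim 3.2.** Let `w` be a solution of `∂ₛ w = V(w)` bounded by `κ` in
`C⁰(I_T,H_1) ∩ C¹(I_T,H_0)`, and let `ξ(s) = Φ(w(s)) ∂ₛw(s) = Φ(w(s)) V(w(s))`.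
Then for every `0 < T' < T` one has `ξ ∈ C¹(I_{T'}, H_{-1})` and
`∂ₛ ξ = DΦ(w)(Φ(w)⁻¹ξ, Φ(w)⁻¹ξ) + P(w)ξ + F ξ`. -/
theorem xi_C1_Hminus1
    (f ζ : ℕ → ℝ) (hf : GoodWeight f) (hζ : Signs ζ)
    (W : UVF (sMem f) (snrm f) (sF f ζ))
    (T κ : ℝ) (hT : 0 < T)
    (w : ℝ → ℕ → ℝ)
    (hsol : IsGradSol (sMem f) (snrm f) W.V T w)
    (hκ : ∀ s ∈ Ioo (-T) T,
      snrm f 1 (w s) ≤ κ ∧ snrm f 0 (w s) ≤ κ ∧ snrm f 0 (W.V (w s)) ≤ κ)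
    (T' : ℝ) (hT' : 0 < T') (hT'T : T' < T)
    (ξ : ℝ → ℕ → ℝ) (hξ : ξ = fun s => W.frame.Φ (w s) (W.V (w s)))
    (η : ℝ → ℕ → ℝ)
    (hη : η = fun s =>
      W.frame.DΦ (w s) (W.frame.Φinv (w s) (ξ s)) (W.frame.Φinv (w s) (ξ s)) +
        W.P (w s) (ξ s) + sF f ζ (ξ s)) :
    ContCurveOn (sMem f) (snrm f) (-1) (Ioo (-T') T') ξ ∧
    HasDerivCurveOn (snrm f) (-1) (Ioo (-T') T') ξ η ∧
    ContCurveOn (sMem f) (snrm f) (-1) (Ioo (-T') T') η := by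
  obtain ⟨⟨hw1, hwc⟩, hwd, hV0, hVc⟩ := hsol
  have hIsub : Ioo (-T') T' ⊆ Ioo (-T) T := Ioo_subset_Ioo (by linarith) hT'T.le
  set M := W.frame with hMdef
  -- basic pointwise facts
  have hξmem : ∀ s ∈ Ioo (-T) T, sMem f 0 (ξ s) := by
    intro s hs
    simp only [hξ]
    exact M.mem_Φ _ _ (hw1 s hs) (hV0 s hs)
  have hξsΦ : ∀ s ∈ Ioo (-T) T, M.Φ (w s) (W.V (w s)) = ξ s := by
    intro s hs
    simp only [hξ]
  have hinvξ : ∀ s ∈ Ioo (-T) T, M.Φinv (w s) (ξ s) = W.V (w s) := by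
    intro s hs
    simp only [hξ]
    exact M.Φ_left_inv _ _ (hw1 s hs) (hV0 s hs)
  have hηrep : ∀ s ∈ Ioo (-T) T, η s
      = M.DΦ (w s) (W.V (w s)) (W.V (w s)) + W.P (w s) (ξ s) + sF f ζ (ξ s) := by
    intro s hs
    simp only [hη, hinvξ s hs]
  have hηmem : ∀ s ∈ Ioo (-T) T, sMem f (-1) (η s) := by
    intro s hs
    rw [hηrep s hs]
    have m1 : sMem f 0 (M.DΦ (w s) (W.V (w s)) (W.V (w s))) :=
      M.mem_DΦ _ _ _ (hw1 s hs) (hV0 s hs) (hV0 s hs)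
    have m2 : sMem f 0 (W.P (w s) (ξ s)) := W.mem_P _ _ (hw1 s hs) (hξmem s hs)
    have m3 : sMem f (-1) (sF f ζ (ξ s)) := sMem_sF hf hζ (hξmem s hs)
    exact ((m1.downneg hf).add hf (m2.downneg hf)).add hf m3
  -- continuity of ξ in H_0
  have hξc : ∀ s ∈ Ioo (-T) T, ∀ ε > 0, ∃ δ > 0, ∀ s' ∈ Ioo (-T) T, |s' - s| < δ →
      snrm f 0 (ξ s' - ξ s) < ε := by
    intro s hs ε hε
    obtain ⟨δ₁, hδ₁, QΦ⟩ := M.cont_Φ (w s) (W.V (w s)) (hw1 s hs) (hV0 s hs) ε hε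
    obtain ⟨δ₂, hδ₂, Q₂⟩ := hwc s hs δ₁ hδ₁
    obtain ⟨δ₃, hδ₃, Q₃⟩ := hVc s hs δ₁ hδ₁
    refine ⟨min δ₂ δ₃, lt_min hδ₂ hδ₃, fun s' hs' hd => ?_⟩
    simp only [hξ]
    exact QΦ (w s') (W.V (w s')) (hw1 s' hs') (hV0 s' hs')
      (Q₂ s' hs' (lt_of_lt_of_le hd (min_le_left _ _)))
      (Q₃ s' hs' (lt_of_lt_of_le hd (min_le_right _ _)))
  -- continuity of η in H_{-1}
  have hηc : ∀ s ∈ Ioo (-T) T, ∀ ε > 0, ∃ δ > 0, ∀ s' ∈ Ioo (-T) T, |s' - s| < δ →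
      snrm f (-1) (η s' - η s) < ε := by
    intro s hs ε hε
    have hε₀ : 0 < ε / (3 * (Real.sqrt (f 0)⁻¹ + 1)) := by
      apply div_pos hε
      positivity
    obtain ⟨δD, hδD, QD⟩ := M.cont_DΦ (w s) (W.V (w s)) (W.V (w s)) (hw1 s hs)
      (hV0 s hs) (hV0 s hs) _ hε₀
    obtain ⟨δP, hδP, QP⟩ := W.cont_P (w s) (ξ s) (hw1 s hs) (hξmem s hs) _ hε₀
    obtain ⟨δ₁, hδ₁, Q₁⟩ := hwc s hs (min δD δP) (lt_min hδD hδP)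
    obtain ⟨δ₂, hδ₂, Q₂⟩ := hVc s hs δD hδD
    obtain ⟨δ₃, hδ₃, Q₃⟩ := hξc s hs (min δP (ε / 3)) (lt_min hδP (by linarith))
    refine ⟨min δ₁ (min δ₂ δ₃), lt_min hδ₁ (lt_min hδ₂ hδ₃), fun s' hs' hd => ?_⟩
    have hd1 : |s' - s| < δ₁ := lt_of_lt_of_le hd (min_le_left _ _)
    have hd2 : |s' - s| < δ₂ :=
      lt_of_lt_of_le hd (le_trans (min_le_right _ _) (min_le_left _ _))
    have hd3 : |s' - s| < δ₃ :=
      lt_of_lt_of_le hd (le_trans (min_le_right _ _) (min_le_right _ _))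
    have hwdiff := Q₁ s' hs' hd1
    have e1 : snrm f 0 (M.DΦ (w s') (W.V (w s')) (W.V (w s'))
        - M.DΦ (w s) (W.V (w s)) (W.V (w s))) < ε / (3 * (Real.sqrt (f 0)⁻¹ + 1)) :=
      QD (w s') (W.V (w s')) (W.V (w s')) (hw1 s' hs') (hV0 s' hs') (hV0 s' hs')
        (lt_of_lt_of_le hwdiff (min_le_left _ _)) (Q₂ s' hs' hd2) (Q₂ s' hs' hd2)
    have e2 : snrm f 0 (W.P (w s') (ξ s') - W.P (w s) (ξ s))
        < ε / (3 * (Real.sqrt (f 0)⁻¹ + 1)) :=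
      QP (w s') (ξ s') (hw1 s' hs') (hξmem s' hs')
        (lt_of_lt_of_le hwdiff (min_le_right _ _))
        (lt_of_lt_of_le (Q₃ s' hs' hd3) (min_le_left _ _))
    have e3 : snrm f (-1) (sF f ζ (ξ s') - sF f ζ (ξ s)) < ε / 3 := by
      rw [← sF_sub, snrm_sF hf hζ]
      exact lt_of_lt_of_le (Q₃ s' hs' hd3) (min_le_right _ _)
    have hsplit : η s' - η s
        = (M.DΦ (w s') (W.V (w s')) (W.V (w s')) - M.DΦ (w s) (W.V (w s)) (W.V (w s)))
          + (W.P (w s') (ξ s') - W.P (w s) (ξ s))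
          + (sF f ζ (ξ s') - sF f ζ (ξ s)) := by
      rw [hηrep s' hs', hηrep s hs]
      abel
    rw [hsplit]
    refine snrm_combo hf ?_ ?_ ?_ e1 e2 e3
    · exact (M.mem_DΦ _ _ _ (hw1 s' hs') (hV0 s' hs') (hV0 s' hs')).sub hf
        (M.mem_DΦ _ _ _ (hw1 s hs) (hV0 s hs) (hV0 s hs))
    · exact (W.mem_P _ _ (hw1 s' hs') (hξmem s' hs')).sub hf
        (W.mem_P _ _ (hw1 s hs) (hξmem s hs))
    · rw [← sF_sub]
      exact sMem_sF hf hζ ((hξmem s' hs').sub hf (hξmem s hs))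
  refine ⟨⟨fun s hs => (hξmem s (hIsub hs)).downneg hf, ?_⟩, ?_,
    fun s hs => hηmem s (hIsub hs), ?_⟩
  · -- continuity of ξ in H_{-1} on I_{T'}
    intro s hs ε hε
    obtain ⟨δ, hδ, Q⟩ := hξc s (hIsub hs) (ε / (Real.sqrt (f 0)⁻¹ + 1))
      (div_pos hε (by positivity))
    refine ⟨δ, hδ, fun s' hs' hd => ?_⟩
    exact snrm_neg_one_lt hf ((hξmem s' (hIsub hs')).sub hf (hξmem s (hIsub hs)))
      (Q s' (hIsub hs') hd)
  · -- differentiability of ξ in H_{-1} on I_{T'}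
    intro s hsI' ε hε
    have hs : s ∈ Ioo (-T) T := hIsub hsI'
    have hx₀ : sMem f 1 (w s) := hw1 s hs
    have hv₀ : sMem f 0 (W.V (w s)) := hV0 s hs
    have hξs0 : sMem f 0 (ξ s) := hξmem s hs
    have hε2 : 0 < ε / 2 := by linarith
    have hε₀ : 0 < ε / 2 / (3 * (Real.sqrt (f 0)⁻¹ + 1)) := by
      apply div_pos hε2
      positivity
    obtain ⟨δD, hδD, QD⟩ := M.cont_DΦ (w s) (W.V (w s)) (W.V (w s)) hx₀ hv₀ hv₀ _ hε₀
    obtain ⟨δP, hδP, QP⟩ := W.cont_P (w s) (ξ s) hx₀ hξs0 _ hε₀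
    obtain ⟨δΦ, hδΦ, QΦ⟩ := M.cont_Φ (w s) (W.V (w s)) hx₀ hv₀ (min δP (ε / 2 / 3))
      (lt_min hδP (by linarith))
    obtain ⟨δV, hδV, QV⟩ := W.cont_V_one (w s) hx₀ δD hδD
    obtain ⟨δa, hδa, Qa⟩ := hwd s hs (min δD δΦ) (lt_min hδD hδΦ)
    obtain ⟨δb, hδb, Qb⟩ := hwc s hs (min δD (min δP (min δΦ δV)))
      (lt_min hδD (lt_min hδP (lt_min hδΦ hδV)))
    refine ⟨min δa δb, lt_min hδa hδb, ?_⟩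
    intro s' hs'I' hne hdist
    have hs' : s' ∈ Ioo (-T) T := hIsub hs'I'
    have hrne : s' - s ≠ 0 := sub_ne_zero.mpr hne
    have hrabs : 0 < |s' - s| := abs_pos.mpr hrne
    set h : ℕ → ℝ := w s' - w s with hhdef
    have hh1 : sMem f 1 h := (hw1 s' hs').sub hf hx₀
    have hh0 : sMem f 0 h := hh1.down hf
    set q : ℕ → ℝ := (s' - s)⁻¹ • h with hqdef
    have hq1 : sMem f 1 q := hh1.smul _
    have hq0 : sMem f 0 q := hq1.down hf
    have hqclose : snrm f 0 (q - W.V (w s)) < min δD δΦ := by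
      rw [hqdef, hhdef]
      exact Qa s' hs' hne (lt_of_lt_of_le hdist (min_le_left _ _))
    have hhsm : snrm f 1 h < min δD (min δP (min δΦ δV)) := by
      rw [hhdef]
      exact Qb s' hs' (lt_of_lt_of_le hdist (min_le_right _ _))
    set γ : ℝ → ℕ → ℝ := fun t => w s + t • h with hγdef
    have hγ1 : ∀ t : ℝ, sMem f 1 (γ t) := by
      intro t
      simp only [hγdef]
      exact hx₀.add hf (hh1.smul t)
    have hγclose : ∀ t ∈ Icc (0:ℝ) 1,
        snrm f 1 (γ t - w s) < min δD (min δP (min δΦ δV)) := by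
      intro t ht
      have e : γ t - w s = t • h := by
        simp only [hγdef]
        abel
      rw [e, snrm_smul]
      have h1 : |t| ≤ 1 := abs_le.mpr ⟨by linarith [ht.1], ht.2⟩
      calc |t| * snrm f 1 h ≤ 1 * snrm f 1 h :=
            mul_le_mul_of_nonneg_right h1 (snrm_nonneg f 1 h)
        _ = snrm f 1 h := one_mul _
        _ < _ := hhsm
    have hVγ : ∀ t : ℝ, sMem f 0 (W.V (γ t)) := fun t => W.mem_V_one _ (hγ1 t)
    set g : ℝ → ℕ → ℝ := fun t => M.Φ (γ t) (W.V (γ t)) with hgdef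
    have hgmem0 : ∀ t : ℝ, sMem f 0 (g t) := by
      intro t
      simp only [hgdef]
      exact M.mem_Φ _ _ (hγ1 t) (hVγ t)
    set u : ℝ → ℕ → ℝ := fun t => W.DV (γ t) h with hudef
    have humem : ∀ t : ℝ, sMem f 0 (u t) := by
      intro t
      simp only [hudef]
      exact W.mem_DV _ _ (hγ1 t) hh1
    set G₀ : ℝ → ℕ → ℝ := fun t => M.DΦ (γ t) h (W.V (γ t)) + M.Φ (γ t) (u t) with hG₀def
    have hG₀mem0 : ∀ t : ℝ, sMem f 0 (G₀ t) := by
      intro t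
      simp only [hG₀def]
      exact (M.mem_DΦ _ _ _ (hγ1 t) hh0 (hVγ t)).add hf (M.mem_Φ _ _ (hγ1 t) (humem t))
    -- pointwise differentiability of `g` along the segment, in `H_0`
    have hgderiv : ∀ t ∈ Icc (0:ℝ) 1, ∀ ε₂ > 0, ∃ δ₂ > 0, ∀ t' ∈ Icc (0:ℝ) 1,
        |t' - t| < δ₂ → snrm f 0 (g t' - g t - (t' - t) • G₀ t) ≤ ε₂ * |t' - t| := by
      intro t ht ε₂ hε₂
      have hnh : 0 < snrm f 1 h + 1 := by
        have := snrm_nonneg f 1 h; linarith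
      have hhle : snrm f 1 h ≤ snrm f 1 h + 1 := by linarith
      have hκ₀pos : 0 < snrm f 1 (w s) + snrm f 1 h + 1 := by
        have h1 := snrm_nonneg f 1 (w s); have h2 := snrm_nonneg f 1 h; linarith
      obtain ⟨c₀, hc₀, hub⟩ := M.uniform_bound _ hκ₀pos
      have hγbd : ∀ t' ∈ Icc (0:ℝ) 1, snrm f 1 (γ t') ≤ snrm f 1 (w s) + snrm f 1 h + 1 := by
        intro t' ht'
        have h1 : |t'| ≤ 1 := abs_le.mpr ⟨by linarith [ht'.1], ht'.2⟩
        have h2 := snrm_nonneg f 1 h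
        calc snrm f 1 (γ t') ≤ snrm f 1 (w s) + snrm f 1 (t' • h) := by
              simp only [hγdef]
              exact snrm_add_le hf hx₀ (hh1.smul t')
          _ = snrm f 1 (w s) + |t'| * snrm f 1 h := by rw [snrm_smul]
          _ ≤ snrm f 1 (w s) + 1 * snrm f 1 h := by nlinarith
          _ ≤ snrm f 1 (w s) + snrm f 1 h + 1 := by linarith
      obtain ⟨δA, hδA, QA⟩ := M.hasDeriv_Φ (γ t) (W.V (γ t)) (hγ1 t) (hVγ t)
        (ε₂ / (3 * (snrm f 1 h + 1))) (div_pos hε₂ (by linarith))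
      obtain ⟨δB, hδB, QB⟩ := W.hasDeriv_V (γ t) (hγ1 t)
        (ε₂ / (3 * c₀ * (snrm f 1 h + 1)))
        (div_pos hε₂ (by positivity))
      obtain ⟨δC, hδC, QC⟩ := M.cont_Φ (γ t) (u t) (hγ1 t) (humem t) (ε₂ / 3) (by linarith)
      refine ⟨min (δA / (snrm f 1 h + 1)) (min (δB / (snrm f 1 h + 1))
        (δC / (snrm f 1 h + 1))),
        lt_min (div_pos hδA hnh) (lt_min (div_pos hδB hnh) (div_pos hδC hnh)), ?_⟩
      intro t' ht' htd
      have hu'1 : sMem f 1 ((t' - t) • h) := hh1.smul _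
      have hu'n : snrm f 1 ((t' - t) • h) = |t' - t| * snrm f 1 h := snrm_smul f 1 _ h
      have hsmall : ∀ δ' : ℝ, |t' - t| < δ' / (snrm f 1 h + 1) →
          snrm f 1 ((t' - t) • h) < δ' := by
        intro δ' hlt
        rw [hu'n]
        calc |t' - t| * snrm f 1 h ≤ |t' - t| * (snrm f 1 h + 1) :=
              mul_le_mul_of_nonneg_left hhle (abs_nonneg _)
          _ < δ' := (lt_div_iff₀ hnh).mp hlt
      have hγt' : γ t' = γ t + (t' - t) • h := by
        simp only [hγdef]
        rw [sub_smul]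
        abel
      -- term A
      have hA := QA ((t' - t) • h) hu'1
        (hsmall δA (lt_of_lt_of_le htd (min_le_left _ _)))
      rw [← hγt'] at hA
      -- term B
      have hBraw := QB ((t' - t) • h) hu'1
        (hsmall δB (lt_of_lt_of_le htd (le_trans (min_le_right _ _) (min_le_left _ _))))
      rw [← hγt'] at hBraw
      set zB : ℕ → ℝ := W.V (γ t') - W.V (γ t) - W.DV (γ t) ((t' - t) • h) with hzBdef
      have hzB0 : sMem f 0 zB := by
        rw [hzBdef]
        exact ((hVγ t').sub hf (hVγ t)).sub hf (W.mem_DV _ _ (hγ1 t) hu'1)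
      have hB1 : snrm f 0 (M.Φ (γ t') zB) ≤ c₀ * snrm f 0 zB :=
        ((hub (γ t') (hγ1 t') (hγbd t' ht')).1 zB hzB0).1
      -- term C
      have hγdsm : snrm f 1 (γ t' - γ t) < δC := by
        rw [show γ t' - γ t = (t' - t) • h from by rw [hγt']; abel]
        exact hsmall δC
          (lt_of_lt_of_le htd (le_trans (min_le_right _ _) (min_le_right _ _)))
      have hC := QC (γ t') (u t) (hγ1 t') (humem t) hγdsm
        (by rw [sub_self, snrm_zero]; exact hδC)
      -- the algebraic identity
      have hDVsmul : W.DV (γ t) ((t' - t) • h) = (t' - t) • u t := by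
        simp only [hudef]
        exact W.smul_DV (γ t) (t' - t) h (hγ1 t) hh1
      have hiden : g t' - g t - (t' - t) • G₀ t
          = (M.Φ (γ t') (W.V (γ t)) - M.Φ (γ t) (W.V (γ t))
              - M.DΦ (γ t) ((t' - t) • h) (W.V (γ t)))
            + M.Φ (γ t') zB
            + (t' - t) • (M.Φ (γ t') (u t) - M.Φ (γ t) (u t)) := by
        have e1 : M.Φ (γ t') zB = M.Φ (γ t') (W.V (γ t')) - M.Φ (γ t') (W.V (γ t))
            - M.Φ (γ t') (W.DV (γ t) ((t' - t) • h)) := by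
          rw [hzBdef,
            Phi_sub M hf (hγ1 t') ((hVγ t').sub hf (hVγ t)) (W.mem_DV _ _ (hγ1 t) hu'1),
            Phi_sub M hf (hγ1 t') (hVγ t') (hVγ t)]
        have e2 : M.Φ (γ t') (W.DV (γ t) ((t' - t) • h)) = (t' - t) • M.Φ (γ t') (u t) := by
          rw [hDVsmul, M.smul_Φ (γ t') (t' - t) (u t) (hγ1 t') (humem t)]
        have e3 : M.DΦ (γ t) ((t' - t) • h) (W.V (γ t))
            = (t' - t) • M.DΦ (γ t) h (W.V (γ t)) :=
          M.smul_DΦ_left (γ t) (t' - t) h (W.V (γ t)) (hγ1 t) hh0 (hVγ t)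
        simp only [hgdef, hG₀def]
        rw [e1, e2, e3, smul_add, smul_sub]
        abel
      rw [hiden]
      -- memberships of the three summands
      have mA : sMem f 0 (M.Φ (γ t') (W.V (γ t)) - M.Φ (γ t) (W.V (γ t))
          - M.DΦ (γ t) ((t' - t) • h) (W.V (γ t))) :=
        ((M.mem_Φ _ _ (hγ1 t') (hVγ t)).sub hf (M.mem_Φ _ _ (hγ1 t) (hVγ t))).sub hf
          (M.mem_DΦ _ _ _ (hγ1 t) (hu'1.down hf) (hVγ t))
      have mB : sMem f 0 (M.Φ (γ t') zB) := M.mem_Φ _ _ (hγ1 t') hzB0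
      have mC : sMem f 0 ((t' - t) • (M.Φ (γ t') (u t) - M.Φ (γ t) (u t))) :=
        ((M.mem_Φ _ _ (hγ1 t') (humem t)).sub hf (M.mem_Φ _ _ (hγ1 t) (humem t))).smul _
      have tri1 := snrm_add_le hf (mA.add hf mB) mC
      have tri2 := snrm_add_le hf mA mB
      -- bounds on the three summands
      have bA : snrm f 0 (M.Φ (γ t') (W.V (γ t)) - M.Φ (γ t) (W.V (γ t))
          - M.DΦ (γ t) ((t' - t) • h) (W.V (γ t))) ≤ ε₂ / 3 * |t' - t| := by
        refine le_trans hA ?_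
        rw [hu'n]
        have key : ε₂ / (3 * (snrm f 1 h + 1)) * (|t' - t| * (snrm f 1 h + 1))
            = ε₂ / 3 * |t' - t| := by
          field_simp
        calc ε₂ / (3 * (snrm f 1 h + 1)) * (|t' - t| * snrm f 1 h)
            ≤ ε₂ / (3 * (snrm f 1 h + 1)) * (|t' - t| * (snrm f 1 h + 1)) := by
              apply mul_le_mul_of_nonneg_left _ (le_of_lt (div_pos hε₂ (by linarith)))
              exact mul_le_mul_of_nonneg_left hhle (abs_nonneg _)
          _ = ε₂ / 3 * |t' - t| := key
      have bB : snrm f 0 (M.Φ (γ t') zB) ≤ ε₂ / 3 * |t' - t| := by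
        refine le_trans hB1 ?_
        have h2 : snrm f 0 zB
            ≤ ε₂ / (3 * c₀ * (snrm f 1 h + 1)) * (|t' - t| * snrm f 1 h) := by
          rw [← hu'n]
          exact hBraw
        have key : c₀ * (ε₂ / (3 * c₀ * (snrm f 1 h + 1)) * (|t' - t| * (snrm f 1 h + 1)))
            = ε₂ / 3 * |t' - t| := by
          field_simp
        calc c₀ * snrm f 0 zB
            ≤ c₀ * (ε₂ / (3 * c₀ * (snrm f 1 h + 1)) * (|t' - t| * snrm f 1 h)) :=
              mul_le_mul_of_nonneg_left h2 hc₀.le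
          _ ≤ c₀ * (ε₂ / (3 * c₀ * (snrm f 1 h + 1)) * (|t' - t| * (snrm f 1 h + 1))) := by
              apply mul_le_mul_of_nonneg_left _ hc₀.le
              apply mul_le_mul_of_nonneg_left _ (le_of_lt (div_pos hε₂ (by positivity)))
              exact mul_le_mul_of_nonneg_left hhle (abs_nonneg _)
          _ = ε₂ / 3 * |t' - t| := key
      have bC : snrm f 0 ((t' - t) • (M.Φ (γ t') (u t) - M.Φ (γ t) (u t)))
          ≤ ε₂ / 3 * |t' - t| := by
        rw [snrm_smul]
        calc |t' - t| * snrm f 0 (M.Φ (γ t') (u t) - M.Φ (γ t) (u t))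
            ≤ |t' - t| * (ε₂ / 3) := mul_le_mul_of_nonneg_left hC.le (abs_nonneg _)
          _ = ε₂ / 3 * |t' - t| := mul_comm _ _
      linarith
    -- the identity `G₀ t = (s' - s) • K t`
    set K : ℝ → ℕ → ℝ := fun t =>
      M.DΦ (γ t) q (W.V (γ t)) + W.P (γ t) (M.Φ (γ t) q) + sF f ζ (M.Φ (γ t) q) with hKdef
    have hΦq1 : ∀ t : ℝ, sMem f 1 (M.Φ (γ t) q) := fun t => M.mem_Φ_one _ _ (hγ1 t) hq1
    have hΦq0 : ∀ t : ℝ, sMem f 0 (M.Φ (γ t) q) := fun t => M.mem_Φ _ _ (hγ1 t) hq0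
    have hhq : h = (s' - s) • q := by
      rw [hqdef, smul_smul, mul_inv_cancel₀ hrne, one_smul]
    have hG₀K : ∀ t : ℝ, G₀ t = (s' - s) • K t := by
      intro t
      have e1 : M.DΦ (γ t) h (W.V (γ t)) = (s' - s) • M.DΦ (γ t) q (W.V (γ t)) := by
        conv_lhs => rw [hhq]
        exact M.smul_DΦ_left (γ t) (s' - s) q (W.V (γ t)) (hγ1 t) hq0 (hVγ t)
      have e2 : u t = (s' - s) • W.DV (γ t) q := by
        simp only [hudef]
        conv_lhs => rw [hhq]
        exact W.smul_DV (γ t) (s' - s) q (hγ1 t) hq1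
      have e3 : M.Φ (γ t) (u t) = (s' - s) • M.Φ (γ t) (W.DV (γ t) q) := by
        rw [e2, M.smul_Φ _ _ _ (hγ1 t) (W.mem_DV _ _ (hγ1 t) hq1)]
      have e4 : M.Φ (γ t) (W.DV (γ t) q)
          = W.P (γ t) (M.Φ (γ t) q) + sF f ζ (M.Φ (γ t) q) := by
        have hp := W.extends_P (γ t) (M.Φ (γ t) q) (hγ1 t) (hΦq1 t)
        rw [M.Φ_left_inv (γ t) q (hγ1 t) hq0] at hp
        rw [hp]
        abel
      simp only [hG₀def, hKdef]
      rw [e1, e3, e4]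
      simp only [smul_add]
      abel
    -- the uniform estimate for `K t - η s`
    have hKclose : ∀ t ∈ Icc (0:ℝ) 1, snrm f (-1) (K t - η s) < ε / 2 := by
      intro t ht
      have hγcl := hγclose t ht
      have hγD : snrm f 1 (γ t - w s) < δD := lt_of_lt_of_le hγcl (min_le_left _ _)
      have hγP : snrm f 1 (γ t - w s) < δP :=
        lt_of_lt_of_le hγcl (le_trans (min_le_right _ _) (min_le_left _ _))
      have hγΦ : snrm f 1 (γ t - w s) < δΦ :=
        lt_of_lt_of_le hγcl (le_trans (min_le_right _ _)
          (le_trans (min_le_right _ _) (min_le_left _ _)))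
      have hγV : snrm f 1 (γ t - w s) < δV :=
        lt_of_lt_of_le hγcl (le_trans (min_le_right _ _)
          (le_trans (min_le_right _ _) (min_le_right _ _)))
      have hVcl : snrm f 0 (W.V (γ t) - W.V (w s)) < δD := QV (γ t) (hγ1 t) hγV
      have hqD : snrm f 0 (q - W.V (w s)) < δD := lt_of_lt_of_le hqclose (min_le_left _ _)
      have hqΦ : snrm f 0 (q - W.V (w s)) < δΦ := lt_of_lt_of_le hqclose (min_le_right _ _)
      have hΦqcl : snrm f 0 (M.Φ (γ t) q - ξ s) < min δP (ε / 2 / 3) := by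
        rw [← hξsΦ s hs]
        exact QΦ (γ t) q (hγ1 t) hq0 hγΦ hqΦ
      have e1 : snrm f 0 (M.DΦ (γ t) q (W.V (γ t)) - M.DΦ (w s) (W.V (w s)) (W.V (w s)))
          < ε / 2 / (3 * (Real.sqrt (f 0)⁻¹ + 1)) :=
        QD (γ t) q (W.V (γ t)) (hγ1 t) hq0 (hVγ t) hγD hqD hVcl
      have e2 : snrm f 0 (W.P (γ t) (M.Φ (γ t) q) - W.P (w s) (ξ s))
          < ε / 2 / (3 * (Real.sqrt (f 0)⁻¹ + 1)) :=
        QP (γ t) (M.Φ (γ t) q) (hγ1 t) (hΦq0 t) hγP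
          (lt_of_lt_of_le hΦqcl (min_le_left _ _))
      have e3 : snrm f (-1) (sF f ζ (M.Φ (γ t) q) - sF f ζ (ξ s)) < ε / 2 / 3 := by
        rw [← sF_sub, snrm_sF hf hζ]
        exact lt_of_lt_of_le hΦqcl (min_le_right _ _)
      have hsplit : K t - η s
          = (M.DΦ (γ t) q (W.V (γ t)) - M.DΦ (w s) (W.V (w s)) (W.V (w s)))
            + (W.P (γ t) (M.Φ (γ t) q) - W.P (w s) (ξ s))
            + (sF f ζ (M.Φ (γ t) q) - sF f ζ (ξ s)) := by
        simp only [hKdef]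
        rw [hηrep s hs]
        abel
      rw [hsplit]
      refine snrm_combo hf ?_ ?_ ?_ e1 e2 e3
      · exact (M.mem_DΦ _ _ _ (hγ1 t) hq0 (hVγ t)).sub hf
          (M.mem_DΦ _ _ _ hx₀ hv₀ hv₀)
      · exact (W.mem_P _ _ (hγ1 t) (hΦq0 t)).sub hf (W.mem_P _ _ hx₀ hξs0)
      · rw [← sF_sub]
        exact sMem_sF hf hζ ((hΦq0 t).sub hf hξs0)
    -- transfer to `ℓ²` and the mean value inequality
    have hgmem : ∀ t : ℝ, sMem f (-1) (g t) := fun t => (hgmem0 t).downneg hf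
    have hG₀memm : ∀ t : ℝ, sMem f (-1) (G₀ t) := fun t => (hG₀mem0 t).downneg hf
    have hηs1 : sMem f (-1) (η s) := hηmem s hs
    have hrη : sMem f (-1) ((s' - s) • η s) := hηs1.smul _
    set JH : lp (fun _ : ℕ => ℝ) 2 := toE f ((s' - s) • η s) with hJHdef
    have hDer : ∀ t ∈ Icc (0:ℝ) 1,
        HasDerivWithinAt (fun t => toE f (g t) - t • JH) (toE f (G₀ t) - JH)
          (Icc (0:ℝ) 1) t := by
      intro t ht
      have h1 : HasDerivWithinAt (fun t => toE f (g t)) (toE f (G₀ t)) (Icc (0:ℝ) 1) t := by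
        apply toE_hasDerivWithinAt hf hgmem (hG₀memm t)
        intro ε₂ hε₂
        obtain ⟨δ₂, hδ₂, Q₂⟩ := hgderiv t ht (ε₂ / (Real.sqrt (f 0)⁻¹ + 1))
          (div_pos hε₂ (by positivity))
        refine ⟨δ₂, hδ₂, fun t' ht' hd => ?_⟩
        have hm0 : sMem f 0 (g t' - g t - (t' - t) • G₀ t) :=
          ((hgmem0 t').sub hf (hgmem0 t)).sub hf ((hG₀mem0 t).smul _)
        have hbb := snrm_neg_one_le hf hm0
        have hq2 := Q₂ t' ht' hd
        have hCm : (0:ℝ) ≤ Real.sqrt (f 0)⁻¹ := Real.sqrt_nonneg _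
        have h4 : Real.sqrt (f 0)⁻¹ * (ε₂ / (Real.sqrt (f 0)⁻¹ + 1)) ≤ ε₂ := by
          rw [← mul_div_assoc, div_le_iff₀ (by linarith)]
          nlinarith
        calc snrm f (-1) (g t' - g t - (t' - t) • G₀ t)
            ≤ Real.sqrt (f 0)⁻¹ * snrm f 0 (g t' - g t - (t' - t) • G₀ t) := hbb
          _ ≤ Real.sqrt (f 0)⁻¹ * (ε₂ / (Real.sqrt (f 0)⁻¹ + 1) * |t' - t|) :=
              mul_le_mul_of_nonneg_left hq2 hCm
          _ = Real.sqrt (f 0)⁻¹ * (ε₂ / (Real.sqrt (f 0)⁻¹ + 1)) * |t' - t| := by ring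
          _ ≤ ε₂ * |t' - t| := mul_le_mul_of_nonneg_right h4 (abs_nonneg _)
      have h2 : HasDerivWithinAt (fun y : ℝ => y • JH) JH (Icc (0:ℝ) 1) t := by
        simpa using ((hasDerivAt_id t).smul_const JH).hasDerivWithinAt
      exact h1.sub h2
    have hbound : ∀ t ∈ Icc (0:ℝ) 1, ‖toE f (G₀ t) - JH‖ ≤ |s' - s| * (ε / 2) := by
      intro t ht
      rw [hJHdef, norm_toE_sub hf (hG₀memm t) hrη, hG₀K t,
        show (s' - s) • K t - (s' - s) • η s = (s' - s) • (K t - η s) from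
          (smul_sub _ _ _).symm,
        snrm_smul]
      exact mul_le_mul_of_nonneg_left (hKclose t ht).le (abs_nonneg _)
    have hMVT := Convex.norm_image_sub_le_of_norm_hasDerivWithin_le hDer hbound
      (convex_Icc 0 1) (left_mem_Icc.mpr zero_le_one) (right_mem_Icc.mpr zero_le_one)
    have hg0 : g 0 = ξ s := by
      simp only [hgdef, hγdef, zero_smul, add_zero]
      exact hξsΦ s hs
    have hg1 : g 1 = ξ s' := by
      have e : w s + (1:ℝ) • h = w s' := by
        rw [one_smul, hhdef]
        abel
      simp only [hgdef, hγdef, e]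
      exact hξsΦ s' hs'
    have hexp : (toE f (g 1) - (1:ℝ) • JH) - (toE f (g 0) - (0:ℝ) • JH)
        = toE f (g 1) - toE f (g 0) - JH := by
      rw [one_smul, zero_smul, sub_zero]
      abel
    rw [hexp, show ‖(1:ℝ) - 0‖ = 1 by norm_num, mul_one] at hMVT
    have hJH' : JH = (s' - s) • toE f (η s) := by
      rw [hJHdef, toE_smul_toE hf hηs1]
    rw [hJH', norm_toE_sub_sub_smul hf (hgmem 1) (hgmem 0) hηs1, hg1, hg0] at hMVT
    -- conclude
    have hre : (s' - s)⁻¹ • (ξ s' - ξ s - (s' - s) • η s)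
        = (s' - s)⁻¹ • (ξ s' - ξ s) - η s := by
      rw [smul_sub, smul_smul, inv_mul_cancel₀ hrne, one_smul]
    rw [← hre, snrm_smul]
    have hstep : |(s' - s)⁻¹| * snrm f (-1) (ξ s' - ξ s - (s' - s) • η s)
        ≤ |(s' - s)⁻¹| * (|s' - s| * (ε / 2)) := mul_le_mul_of_nonneg_left hMVT (abs_nonneg _)
    have heq : |(s' - s)⁻¹| * (|s' - s| * (ε / 2)) = ε / 2 := by
      rw [abs_inv]
      field_simp
    linarith
  · -- continuity of η in H_{-1} on I_{T'}
    intro s hs ε hε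
    obtain ⟨δ, hδ, Q⟩ := hηc s (hIsub hs) ε hε
    exact ⟨δ, hδ, fun s' hs' hd => Q s' (hIsub hs') hd⟩



end NLGF
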